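/- arXiv:2204.06759 — 2 statements merged into one kernel-verified Lean document; each statement's English description precedes it below -/
import Mathlib

section
/- Let n, p be natural numbers with p ≥ 2 and b : Fin n → Fin p a block assignment map. If A is a real symmetric n×n scaled diagonally dominant matrix (i.e. there exists a diagonal matrix D with strictly positive diagonal entries such that DAD is diagonally dominant with nonnegative diagonal), then A belongs to FW_b. In particular SDD_n ⊆ FW_b for every block partition with at least two blocks. -/
open Matrix Finset

/-- `A` is block factor-width-two w.r.t. the block assignment map `b`:
`A = ∑_{k<l} Q k l` with each `Q k l` positive semidefinite and supported on blocks `k`, `l`. -/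
def memFW {n p : ℕ} (b : Fin n → Fin p) (A : Matrix (Fin n) (Fin n) ℝ) : Prop :=
  ∃ Q : Fin p → Fin p → Matrix (Fin n) (Fin n) ℝ,
    (∀ k l : Fin p, k < l → (Q k l).PosSemidef) ∧
    (∀ k l : Fin p, k < l → ∀ i j : Fin n,
      (b i ≠ k ∧ b i ≠ l) ∨ (b j ≠ k ∧ b j ≠ l) → Q k l i j = 0) ∧
    A = ∑ k : Fin p, ∑ l ∈ Finset.Ioi k, Q k l

/-- The cone `FW_b(V) = { Vᵀ Q V : Q ∈ FW_b }`. -/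
def memFWV {n p : ℕ} (b : Fin n → Fin p) (V M : Matrix (Fin n) (Fin n) ℝ) : Prop :=
  ∃ Q, memFW b Q ∧ M = Vᵀ * Q * V

/-- `M` is diagonally dominant with nonnegative diagonal. -/
def IsDD {n : ℕ} (M : Matrix (Fin n) (Fin n) ℝ) : Prop :=
  ∀ i : Fin n, ∑ j ∈ Finset.univ.erase i, |M i j| ≤ M i i

/-- `A` is scaled diagonally dominant: `DAD` is DD for some positive diagonal `D`. -/
def IsSDD {n : ℕ} (A : Matrix (Fin n) (Fin n) ℝ) : Prop :=
  ∃ d : Fin n → ℝ, (∀ i, 0 < d i) ∧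
    IsDD (Matrix.diagonal d * A * Matrix.diagonal d)

noncomputable def vv {n : ℕ} (d : Fin n → ℝ) (M : Matrix (Fin n) (Fin n) ℝ) (i j : Fin n) :
    Fin n → ℝ :=
  fun t => if t = i then 1 / d i else if t = j then (if 0 ≤ M i j then 1 else -1) / d j else 0

noncomputable def cc {n : ℕ} (M : Matrix (Fin n) (Fin n) ℝ) (i j : Fin n) : ℝ :=
  if i = j then M i i - ∑ j' ∈ Finset.univ.erase i, |M i j'| else |M i j| / 2

noncomputable def UU {n : ℕ} (d : Fin n → ℝ) (M : Matrix (Fin n) (Fin n) ℝ) (i j : Fin n) :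
    Matrix (Fin n) (Fin n) ℝ :=
  cc M i j • vecMulVec (vv d M i j) (vv d M i j)

lemma UU_apply {n : ℕ} (d : Fin n → ℝ) (M : Matrix (Fin n) (Fin n) ℝ) (i j s t : Fin n) :
    UU d M i j s t = cc M i j * vv d M i j s * vv d M i j t := by
  simp [UU, vecMulVec_apply, mul_assoc]

lemma vv_eq_zero {n : ℕ} (d : Fin n → ℝ) (M : Matrix (Fin n) (Fin n) ℝ) {i j s : Fin n}
    (h1 : s ≠ i) (h2 : s ≠ j) : vv d M i j s = 0 := by
  simp [vv, h1, h2]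

lemma vv_fst {n : ℕ} (d : Fin n → ℝ) (M : Matrix (Fin n) (Fin n) ℝ) (i j : Fin n) :
    vv d M i j i = 1 / d i := by simp [vv]

lemma vv_snd {n : ℕ} (d : Fin n → ℝ) (M : Matrix (Fin n) (Fin n) ℝ) {i j : Fin n}
    (h : j ≠ i) : vv d M i j j = (if 0 ≤ M i j then 1 else -1) / d j := by
  simp [vv, h]

lemma sgn_mul_abs (x : ℝ) : (if 0 ≤ x then (1:ℝ) else -1) * |x| = x := by
  split_ifs with h
  · rw [abs_of_nonneg h, one_mul]
  · rw [abs_of_neg (lt_of_not_ge h)]; ring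

lemma sgn_sq (x : ℝ) : (if 0 ≤ x then (1:ℝ) else -1) * (if 0 ≤ x then (1:ℝ) else -1) = 1 := by
  split_ifs <;> norm_num

-- entry values of the pieces
lemma UU_offdiag {n : ℕ} (d : Fin n → ℝ) (M : Matrix (Fin n) (Fin n) ℝ) {i j : Fin n}
    (h : i ≠ j) : UU d M i j i j = M i j / (2 * d i * d j) := by
  rw [UU_apply, vv_fst, vv_snd d M (Ne.symm h), cc, if_neg h]
  rw [div_mul_div_comm, div_mul_div_comm]
  rw [show |M i j| * 1 * (if 0 ≤ M i j then (1:ℝ) else -1) = M i j by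
    rw [mul_one, mul_comm, sgn_mul_abs]]

lemma UU_offdiag' {n : ℕ} (d : Fin n → ℝ) (M : Matrix (Fin n) (Fin n) ℝ) {i j : Fin n}
    (h : i ≠ j) : UU d M i j j i = M i j / (2 * d i * d j) := by
  rw [UU_apply, vv_fst, vv_snd d M (Ne.symm h), cc, if_neg h]
  rw [div_mul_div_comm, div_mul_div_comm]
  rw [show |M i j| * (if 0 ≤ M i j then (1:ℝ) else -1) * 1 = M i j by
    rw [mul_one, mul_comm, sgn_mul_abs]]
  ring_nf

lemma UU_fst_fst {n : ℕ} (d : Fin n → ℝ) (M : Matrix (Fin n) (Fin n) ℝ) (i j : Fin n) :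
    UU d M i j i i = cc M i j / (d i)^2 := by
  rw [UU_apply, vv_fst]
  field_simp

lemma UU_snd_snd {n : ℕ} (d : Fin n → ℝ) (M : Matrix (Fin n) (Fin n) ℝ) {i j : Fin n}
    (h : i ≠ j) : UU d M i j j j = |M i j| / (2 * (d j)^2) := by
  rw [UU_apply, vv_snd d M (Ne.symm h), cc, if_neg h]
  rw [div_mul_div_comm, div_mul_div_comm]
  rw [show (|M i j| * if 0 ≤ M i j then (1:ℝ) else -1) * (if 0 ≤ M i j then (1:ℝ) else -1)
      = |M i j| by rw [mul_assoc, sgn_sq, mul_one]]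
  ring

lemma UU_zero {n : ℕ} (d : Fin n → ℝ) (M : Matrix (Fin n) (Fin n) ℝ) {i j s t : Fin n}
    (h : (s ≠ i ∧ s ≠ j) ∨ (t ≠ i ∧ t ≠ j)) : UU d M i j s t = 0 := by
  rw [UU_apply]
  rcases h with ⟨h1, h2⟩ | ⟨h1, h2⟩
  · rw [vv_eq_zero d M h1 h2]; ring
  · rw [vv_eq_zero d M h1 h2]; ring

lemma cc_offdiag {n : ℕ} (M : Matrix (Fin n) (Fin n) ℝ) {i j : Fin n} (h : i ≠ j) :
    cc M i j = |M i j| / 2 := by simp [cc, h]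

lemma cc_diag {n : ℕ} (M : Matrix (Fin n) (Fin n) ℝ) (i : Fin n) :
    cc M i i = M i i - ∑ j' ∈ Finset.univ.erase i, |M i j'| := by simp [cc]

lemma dsum_left {n : ℕ} (s : Fin n) (g : Fin n → ℝ) :
    ∑ i : Fin n, ∑ j : Fin n, (if i = s then g j else 0) = ∑ j : Fin n, g j := by
  have h : ∀ i : Fin n, (∑ j : Fin n, if i = s then g j else 0)
      = if i = s then ∑ j : Fin n, g j else 0 := by
    intro i; by_cases hi : i = s <;> simp [hi]
  rw [Finset.sum_congr rfl fun i _ => h i]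
  simp

lemma sum_UU {n : ℕ} (d : Fin n → ℝ) (A M : Matrix (Fin n) (Fin n) ℝ)
    (hd : ∀ i, 0 < d i) (hM : ∀ i j, M i j = d i * A i j * d j)
    (hAs : ∀ i j, A j i = A i j) :
    A = ∑ i : Fin n, ∑ j : Fin n, UU d M i j := by
  have hMs : ∀ i j, M j i = M i j := by
    intro i j; rw [hM, hM, hAs]; ring
  have hdne : ∀ i, d i ≠ 0 := fun i => (hd i).ne'
  ext s t
  simp only [Matrix.sum_apply]
  by_cases hst : s = t
  · -- diagonal entry
    subst hst
    have key : ∀ i j : Fin n, UU d M i j s s =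
        (if i = s then (if j = s then cc M s s / (d s)^2 else |M s j| / (2 * (d s)^2)) else 0)
        + (if i ≠ s ∧ j = s then |M i s| / (2 * (d s)^2) else 0) := by
      intro i j
      by_cases hi : i = s
      · subst hi
        rw [if_pos rfl, if_neg (by tauto : ¬(i ≠ i ∧ j = i)), add_zero]
        by_cases hj : j = i
        · subst hj
          rw [if_pos rfl, UU_fst_fst]
        · rw [if_neg hj, UU_fst_fst, cc_offdiag M (fun h => hj h.symm)]
          ring
      · rw [if_neg hi]
        by_cases hj : j = s
        · subst hj
          rw [if_pos ⟨hi, rfl⟩, zero_add, UU_snd_snd d M hi]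
        · rw [if_neg (by tauto : ¬(i ≠ s ∧ j = s)), add_zero,
            UU_zero d M (Or.inl ⟨fun h => hi h.symm, fun h => hj h.symm⟩)]
    rw [Finset.sum_congr rfl (fun i _ => Finset.sum_congr rfl (fun j _ => key i j))]
    rw [Finset.sum_congr rfl (fun i _ => Finset.sum_add_distrib), Finset.sum_add_distrib]
    rw [dsum_left s (fun j => if j = s then cc M s s / (d s)^2 else |M s j| / (2 * (d s)^2))]
    have h2 : (∑ i : Fin n, ∑ j : Fin n,
        (if i ≠ s ∧ j = s then |M i s| / (2 * (d s)^2) else 0))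
        = ∑ i ∈ Finset.univ.erase s, |M s i| / (2 * (d s)^2) := by
      have e1 : ∀ i : Fin n, (∑ j : Fin n, if i ≠ s ∧ j = s then |M i s| / (2 * (d s)^2) else 0)
          = if i ∈ Finset.univ.erase s then |M s i| / (2 * (d s)^2) else 0 := by
        intro i
        by_cases hi : i = s
        · simp [hi]
        · simp [hi, hMs i s, Finset.sum_ite_eq' Finset.univ s]
      rw [Finset.sum_congr rfl (fun i _ => e1 i), Finset.sum_ite_mem, Finset.univ_inter]
    rw [h2]
    rw [← Finset.sum_erase_add _ _ (Finset.mem_univ s), if_pos rfl]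
    rw [Finset.sum_congr rfl
      (fun j hj => by rw [if_neg (Finset.mem_erase.mp hj).1] :
        ∀ j ∈ Finset.univ.erase s, _ = |M s j| / (2 * (d s)^2))]
    have hds : d s ≠ 0 := hdne s
    have hAss : A s s = M s s / (d s)^2 := by
      rw [hM]; field_simp
    rw [hAss, cc_diag, ← Finset.sum_div]
    field_simp
    ring
  · -- off-diagonal entry
    have hds : d s ≠ 0 := hdne s
    have hdt : d t ≠ 0 := hdne t
    have hAst : A s t = M s t / (d s * d t) := by
      rw [hM]; field_simp
    have key : ∀ i j : Fin n, UU d M i j s t =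
        (if i = s then (if j = t then A s t / 2 else 0) else 0)
        + (if i = t then (if j = s then A s t / 2 else 0) else 0) := by
      intro i j
      by_cases hi1 : i = s
      · subst hi1
        rw [if_pos rfl, if_neg hst, add_zero]
        by_cases hj : j = t
        · subst hj
          rw [if_pos rfl, UU_offdiag d M hst, hAst]
          have h1 : d i ≠ 0 := hdne i
          have h2 : d j ≠ 0 := hdne j
          field_simp
        · rw [if_neg hj, UU_zero d M (Or.inr ⟨fun h => hst h.symm, fun h => hj h.symm⟩)]
      · rw [if_neg hi1]
        by_cases hi2 : i = t
        · subst hi2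
          rw [if_pos rfl, zero_add]
          by_cases hj : j = s
          · subst hj
            rw [if_pos rfl, UU_offdiag' d M hi1, hAs i j, hM i j]
            have h1 : d i ≠ 0 := hdne i
            have h2 : d j ≠ 0 := hdne j
            field_simp
          · rw [if_neg hj, UU_zero d M
              (Or.inl ⟨fun h => hi1 h.symm, fun h => hj h.symm⟩)]
        · have h0 : UU d M i j s t = 0 := by
            by_cases hj : j = s
            · subst hj
              exact UU_zero d M (Or.inr ⟨fun h => hi2 h.symm, fun h => hst h.symm⟩)
            · exact UU_zero d M (Or.inl ⟨fun h => hi1 h.symm, fun h => hj h.symm⟩)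
          rw [if_neg hi2, h0, add_zero]
    rw [Finset.sum_congr rfl (fun i _ => Finset.sum_congr rfl (fun j _ => key i j))]
    rw [Finset.sum_congr rfl (fun i _ => Finset.sum_add_distrib), Finset.sum_add_distrib]
    rw [dsum_left s (fun j => if j = t then A s t / 2 else 0),
      dsum_left t (fun j => if j = s then A s t / 2 else 0)]
    simp only [Finset.sum_ite_eq', Finset.mem_univ, if_true]
    ring

def pairUp {p : ℕ} (hp : 2 ≤ p) (c c' : Fin p) : Fin p × Fin p :=
  if c < c' then (c, c') else if c' < c then (c', c)
  else if h : c.1 + 1 < p then (c, ⟨c.1 + 1, h⟩)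
  else (⟨c.1 - 1, Nat.lt_of_le_of_lt (Nat.sub_le _ _) c.2⟩, c)

lemma pairUp_lt {p : ℕ} (hp : 2 ≤ p) (c c' : Fin p) :
    (pairUp hp c c').1 < (pairUp hp c c').2 := by
  unfold pairUp
  split_ifs with h1 h2 h3
  · exact h1
  · exact h2
  · exact Fin.mk_lt_mk.mpr (Nat.lt_succ_self _)
  · exact Fin.mk_lt_mk.mpr (by omega)

lemma pairUp_mem_left {p : ℕ} (hp : 2 ≤ p) (c c' : Fin p) :
    c = (pairUp hp c c').1 ∨ c = (pairUp hp c c').2 := by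
  unfold pairUp
  split_ifs with h1 h2 h3 <;> simp

lemma pairUp_mem_right {p : ℕ} (hp : 2 ≤ p) (c c' : Fin p) :
    c' = (pairUp hp c c').1 ∨ c' = (pairUp hp c c').2 := by
  rcases lt_trichotomy c c' with h | h | h
  · unfold pairUp; rw [if_pos h]; simp
  · subst h
    exact pairUp_mem_left hp c c
  · unfold pairUp; rw [if_neg (not_lt_of_gt h), if_pos h]; simp

lemma sum_Ioi_pair {n p : ℕ} (q : Fin p × Fin p) (hq : q.1 < q.2)
    (X : Matrix (Fin n) (Fin n) ℝ) :
    (∑ k : Fin p, ∑ l ∈ Finset.Ioi k, (if q = (k, l) then X else 0)) = X := by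
  rw [Finset.sum_eq_single q.1]
  · rw [Finset.sum_eq_single_of_mem q.2 (Finset.mem_Ioi.mpr hq)]
    · rw [if_pos Prod.mk.eta.symm]
    · intro l _ hl
      exact if_neg (fun h => hl (congrArg Prod.snd h).symm)
  · intro k _ hk
    exact Finset.sum_eq_zero fun l _ =>
      if_neg (fun h => hk (congrArg Prod.fst h).symm)
  · intro h
    exact absurd (Finset.mem_univ q.1) h

lemma psd_smul_vecMulVec {n : ℕ} {c : ℝ} (hc : 0 ≤ c) (v : Fin n → ℝ) :
    (c • vecMulVec v v).PosSemidef := by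
  refine Matrix.PosSemidef.of_dotProduct_mulVec_nonneg ?_ ?_
  · ext i j
    simp [vecMulVec_apply, mul_comm, Matrix.conjTranspose_apply]
  · intro x
    have h : (c • vecMulVec v v) *ᵥ x = (c * (v ⬝ᵥ x)) • v := by
      ext i
      simp [mulVec, dotProduct, vecMulVec_apply, Finset.mul_sum, Finset.sum_mul]; ring_nf
    rw [h]
    simp only [star_trivial, dotProduct_smul, smul_eq_mul]
    have : x ⬝ᵥ v = v ⬝ᵥ x := dotProduct_comm x v
    rw [this]
    have := mul_self_nonneg (v ⬝ᵥ x)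
    nlinarith

lemma psd_sum {n : ℕ} {α : Type*} (s : Finset α) (f : α → Matrix (Fin n) (Fin n) ℝ)
    (h : ∀ i ∈ s, (f i).PosSemidef) : (∑ i ∈ s, f i).PosSemidef :=
  Finset.sum_induction f _ (fun _ _ ha hb => ha.add hb) Matrix.PosSemidef.zero h

noncomputable def QQ {n p : ℕ} (hp : 2 ≤ p) (b : Fin n → Fin p) (d : Fin n → ℝ)
    (M : Matrix (Fin n) (Fin n) ℝ) (k l : Fin p) : Matrix (Fin n) (Fin n) ℝ :=
  ∑ i : Fin n, ∑ j : Fin n,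
    (if pairUp hp (b i) (b j) = (k, l) then UU d M i j else 0)

lemma QQ_psd {n p : ℕ} (hp : 2 ≤ p) (b : Fin n → Fin p) (d : Fin n → ℝ)
    (M : Matrix (Fin n) (Fin n) ℝ) (hcc : ∀ i j, 0 ≤ cc M i j) (k l : Fin p) :
    (QQ hp b d M k l).PosSemidef := by
  apply psd_sum
  intro i _
  apply psd_sum
  intro j _
  by_cases hc : pairUp hp (b i) (b j) = (k, l)
  · rw [if_pos hc]
    exact psd_smul_vecMulVec (hcc i j) _
  · rw [if_neg hc]
    exact Matrix.PosSemidef.zero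

lemma QQ_support {n p : ℕ} (hp : 2 ≤ p) (b : Fin n → Fin p) (d : Fin n → ℝ)
    (M : Matrix (Fin n) (Fin n) ℝ) (k l : Fin p) (i' j' : Fin n)
    (h : (b i' ≠ k ∧ b i' ≠ l) ∨ (b j' ≠ k ∧ b j' ≠ l)) :
    QQ hp b d M k l i' j' = 0 := by
  unfold QQ
  simp only [Matrix.sum_apply]
  apply Finset.sum_eq_zero
  intro i _
  apply Finset.sum_eq_zero
  intro j _
  by_cases hc : pairUp hp (b i) (b j) = (k, l)
  · rw [if_pos hc]
    have hbi : b i = k ∨ b i = l := by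
      rcases pairUp_mem_left hp (b i) (b j) with h' | h'
      · exact Or.inl (h'.trans (congrArg Prod.fst hc))
      · exact Or.inr (h'.trans (congrArg Prod.snd hc))
    have hbj : b j = k ∨ b j = l := by
      rcases pairUp_mem_right hp (b i) (b j) with h' | h'
      · exact Or.inl (h'.trans (congrArg Prod.fst hc))
      · exact Or.inr (h'.trans (congrArg Prod.snd hc))
    rcases h with ⟨h1, h2⟩ | ⟨h1, h2⟩
    · refine UU_zero d M (Or.inl ⟨fun he => ?_, fun he => ?_⟩)
      · subst he; rcases hbi with h' | h' <;> [exact h1 h'; exact h2 h']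
      · subst he; rcases hbj with h' | h' <;> [exact h1 h'; exact h2 h']
    · refine UU_zero d M (Or.inr ⟨fun he => ?_, fun he => ?_⟩)
      · subst he; rcases hbi with h' | h' <;> [exact h1 h'; exact h2 h']
      · subst he; rcases hbj with h' | h' <;> [exact h1 h'; exact h2 h']
  · rw [if_neg hc]
    rfl

lemma QQ_sum {n p : ℕ} (hp : 2 ≤ p) (b : Fin n → Fin p) (d : Fin n → ℝ)
    (M : Matrix (Fin n) (Fin n) ℝ) :
    (∑ k : Fin p, ∑ l ∈ Finset.Ioi k, QQ hp b d M k l)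
      = ∑ i : Fin n, ∑ j : Fin n, UU d M i j := by
  unfold QQ
  have h1 : ∀ k : Fin p, (∑ l ∈ Finset.Ioi k, ∑ i : Fin n, ∑ j : Fin n,
      (if pairUp hp (b i) (b j) = (k, l) then UU d M i j else 0))
      = ∑ i : Fin n, ∑ j : Fin n, ∑ l ∈ Finset.Ioi k,
      (if pairUp hp (b i) (b j) = (k, l) then UU d M i j else 0) := by
    intro k
    rw [Finset.sum_comm]
    exact Finset.sum_congr rfl fun i _ => Finset.sum_comm
  rw [Finset.sum_congr rfl fun k _ => h1 k, Finset.sum_comm]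
  refine (Finset.sum_congr rfl fun i _ => Finset.sum_comm).trans ?_
  exact Finset.sum_congr rfl fun i _ => Finset.sum_congr rfl fun j _ =>
    sum_Ioi_pair (pairUp hp (b i) (b j)) (pairUp_lt hp (b i) (b j)) (UU d M i j)

theorem sdd_memFW {n p : ℕ} (hp : 2 ≤ p) (b : Fin n → Fin p)
    (A : Matrix (Fin n) (Fin n) ℝ) (hA : A.IsSymm) (hSDD : IsSDD A) :
    memFW b A := by
  obtain ⟨d, hd, hDD⟩ := hSDD
  set M : Matrix (Fin n) (Fin n) ℝ := Matrix.diagonal d * A * Matrix.diagonal d with hMdef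
  have hM : ∀ i j, M i j = d i * A i j * d j := by
    intro i j
    simp only [hMdef, Matrix.diagonal_mul, Matrix.mul_diagonal, Matrix.of_apply]
  have hccpos : ∀ i j : Fin n, 0 ≤ cc M i j := by
    intro i j
    unfold cc
    split_ifs with h
    · exact sub_nonneg.mpr (hDD i)
    · positivity
  refine ⟨QQ hp b d M, fun k l _ => QQ_psd hp b d M hccpos k l,
    fun k l _ i j h => QQ_support hp b d M k l i j h, ?_⟩
  rw [QQ_sum hp b d M]
  exact sum_UU d A M hd hM hA.apply
end

section
/- (Monotonically increasing lower bounds, Proposition 2 key step.) Let n, m, p ∈ ℕ with p ≥ 2, b : Fin n → Fin p a block assignment map, C, A_1, …, A_m real symmetric n×n matrices and g ∈ ℝ^m. Suppose y ∈ D(V) for some real n×n matrix V (i.e. C − Σ_{i=1}^m y_i A_i ∈ FW_b(V)), set Z := C − Σ_{i=1}^m y_i A_i, and let V' be any real n×n matrix with V'ᵀ V' = Z (e.g. a Cholesky factor of Z). Then y ∈ D(V'); consequently, if the set {gᵀ z : z ∈ D(V')} is bounded above, its supremum is at least gᵀ y. In particular the optimal values L^t of the iterative outer approximation with V_{t+1}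 = chol(C − Σ_i y_i^{t,⋆} A_i) satisfy L^1 ≤ L^2 ≤ … ≤ L^t ≤ L^{t+1}. -/
open Matrix Finset

/-- Dual inner-approximation feasible set at `V`:
`y` such that `C − ∑ i, y i • A i ∈ FW_b(V)`. -/
def Dset {n m p : ℕ} (b : Fin n → Fin p) (C : Matrix (Fin n) (Fin n) ℝ)
    (A : Fin m → Matrix (Fin n) (Fin n) ℝ)
    (V : Matrix (Fin n) (Fin n) ℝ) : Set (Fin m → ℝ) :=
  {y | memFWV b V (C - ∑ i : Fin m, y i • A i)}

lemma sum_pair_indicator {p : ℕ} (a c : Fin p) (h : a < c) :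
    ∑ k : Fin p, ∑ l ∈ Finset.Ioi k, (if (a, c) = (k, l) then (1:ℝ) else 0) = 1 := by
  rw [Finset.sum_eq_single a]
  · rw [Finset.sum_eq_single c]
    · simp
    · intro l _ hne
      simp only [Prod.mk.injEq, ite_eq_right_iff, and_imp]
      intro _ hcl; exact absurd hcl.symm hne
    · intro hc; exact absurd (Finset.mem_Ioi.mpr h) hc
  · intro k _ hk
    apply Finset.sum_eq_zero
    intro l _
    simp only [Prod.mk.injEq, ite_eq_right_iff, and_imp]
    intro hak _; exact absurd hak.symm hk
  · simp

lemma one_memFW {n p : ℕ} (hp : 2 ≤ p) (b : Fin n → Fin p) :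
    memFW b (1 : Matrix (Fin n) (Fin n) ℝ) := by
  set k0 : Fin p := ⟨0, by omega⟩ with hk0
  set k1 : Fin p := ⟨1, by omega⟩ with hk1
  set P : Fin n → Fin p × Fin p := fun i => if b i = k0 then (k0, k1) else (k0, b i) with hP
  have hPlt : ∀ i, (P i).1 < (P i).2 := by
    intro i
    by_cases hb : b i = k0 <;> simp only [hP, hb, if_true, if_false, reduceIte]
    · exact Fin.mk_lt_mk.mpr (by omega)
    · refine lt_of_le_of_ne (Fin.mk_le_mk.mpr (by omega) : k0 ≤ b i) (Ne.symm hb)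
  refine ⟨fun k l => Matrix.diagonal (fun i => if P i = (k, l) then 1 else 0), ?_, ?_, ?_⟩
  · intro k l _
    refine Matrix.posSemidef_diagonal_iff.mpr (fun i => ?_)
    split_ifs <;> norm_num
  · intro k l hkl i j hij
    show Matrix.diagonal (fun i => if P i = (k, l) then (1:ℝ) else 0) i j = 0
    by_cases hije : i = j
    · subst hije
      rw [Matrix.diagonal_apply_eq]
      rw [if_neg]
      intro h
      by_cases hb : b i = k0
      · simp only [hP, hb, if_true, reduceIte, Prod.mk.injEq] at h
        rcases hij with ⟨h1, _⟩ | ⟨h1, _⟩ <;> exact h1 (hb.trans h.1)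
      · simp only [hP, hb, if_false, reduceIte, Prod.mk.injEq] at h
        rcases hij with ⟨_, h2⟩ | ⟨_, h2⟩ <;> exact h2 h.2
    · exact Matrix.diagonal_apply_ne _ hije
  · have h1 : ∀ i, ∑ k : Fin p, ∑ l ∈ Finset.Ioi k, (if P i = (k, l) then (1:ℝ) else 0) = 1 := by
      intro i
      have h := sum_pair_indicator (P i).1 (P i).2 (hPlt i)
      simpa using h
    calc (1 : Matrix (Fin n) (Fin n) ℝ)
        = Matrix.diagonal (fun i => ∑ k : Fin p, ∑ l ∈ Finset.Ioi k,
            (if P i = (k, l) then (1:ℝ) else 0)) := by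
          rw [show (fun i => ∑ k : Fin p, ∑ l ∈ Finset.Ioi k,
            (if P i = (k, l) then (1:ℝ) else 0)) = fun _ => (1:ℝ) from funext h1,
            Matrix.diagonal_one]
      _ = ∑ k : Fin p, ∑ l ∈ Finset.Ioi k,
            Matrix.diagonal (fun i => if P i = (k, l) then (1:ℝ) else 0) := by
          ext i j
          by_cases hije : i = j
          · subst hije
            simp [Matrix.sum_apply]
          · simp [Matrix.sum_apply, Matrix.diagonal_apply_ne _ hije]

theorem outer_approx_monotone_step {n m p : ℕ} (hp : 2 ≤ p) (b : Fin n → Fin p)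
    (C : Matrix (Fin n) (Fin n) ℝ) (A : Fin m → Matrix (Fin n) (Fin n) ℝ)
    (g : Fin m → ℝ) (hC : C.IsSymm) (hAs : ∀ i, (A i).IsSymm)
    (V V' : Matrix (Fin n) (Fin n) ℝ) (y : Fin m → ℝ)
    (hy : y ∈ Dset b C A V)
    (hV' : V'ᵀ * V' = C - ∑ i : Fin m, y i • A i) :
    y ∈ Dset b C A V' ∧
    (BddAbove {r : ℝ | ∃ z ∈ Dset b C A V', r = g ⬝ᵥ z} →
      g ⬝ᵥ y ≤ sSup {r : ℝ | ∃ z ∈ Dset b C A V', r = g ⬝ᵥ z}) := by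
  have key : y ∈ Dset b C A V' := by
    refine ⟨1, one_memFW hp b, ?_⟩
    rw [Matrix.mul_one, hV']
  refine ⟨key, fun hb => ?_⟩
  exact le_csSup hb ⟨y, key, rfl⟩
end
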